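/- Suppose H is a weight-preserving operator on V⊗V (i.e. ⟨ν,ν'|H|η,η'⟩ ≠ 0 implies ν+ν' = η+η') with eigenvector w = Σ_{η,η'} W(η,η')|η,η'⟩ of eigenvalue a. Assume the function W satisfies: (i) ∏_{k<L+1} W(η^k,η^{L+1}) depends only on η¹+…+η^L and η^{L+1}, and (ii) ∏_{k=1}^{L-1} W(η^k,η^L)·W(η^k,η^{L+1}) depends only on η¹+…+η^{L-1} and η^L+η^{L+1}, for every L ≥ 2. Define the global Hamiltonian on L sites by 𝓗 = H_{12} + H_{23} + … + H_{L-1,L}, and define 𝐰 = Σ_{η¹,…,η^L} (∏_{k<l} W(η^k,η^l)) |η¹,…,η^L⟩. Then 𝓗𝐰 = (L−1)·a·𝐰. -/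
import Mathlib


open Finset

/-- The set of n-tuples of nonnegative integers (each at most J) summing to J. -/
abbrev BJ (n J : ℕ) := {μ : Fin n → Fin (J + 1) // ∑ i, (μ i : ℕ) = J}

/-- If H is weight preserving on V ⊗ V, has an eigenvector w = Σ W(η,η')|η,η'⟩ with
eigenvalue a, and W satisfies the two product assumptions, then the global Hamiltonian
𝓗 = H₁₂ + ⋯ + H_{L-1,L} on L sites has 𝐰 = Σ (∏_{k<l} W(η^k,η^l)) |η¹,…,η^L⟩ as an
eigenvector with eigenvalue (L-1)·a. -/
theorem stmt4 (n J L : ℕ) (hL : 2 ≤ L) (a : ℂ)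
    (H : (BJ n J × BJ n J) → (BJ n J × BJ n J) → ℂ)
    (hwp : ∀ p r : BJ n J × BJ n J, H p r ≠ 0 →
      ∀ i, ((p.1.1 i : ℕ) + (p.2.1 i : ℕ)) = ((r.1.1 i : ℕ) + (r.2.1 i : ℕ)))
    (W : BJ n J → BJ n J → ℂ)
    (heig : ∀ p : BJ n J × BJ n J, ∑ r : BJ n J × BJ n J, H p r * W r.1 r.2 = a * W p.1 p.2)
    -- assumption (i): ∏_{k<M+1} W(η^k, τ) depends only on η¹+…+η^M and τ
    (hi1 : ∀ (M : ℕ) (η σ : Fin M → BJ n J) (τ : BJ n J),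
      (∀ i, ∑ k, ((η k).1 i : ℕ) = ∑ k, ((σ k).1 i : ℕ)) →
      ∏ k, W (η k) τ = ∏ k, W (σ k) τ)
    -- assumption (ii): ∏_{k<M} W(η^k,α)·W(η^k,β) depends only on η¹+…+η^M and α+β
    (hi2 : ∀ (M : ℕ) (η σ : Fin M → BJ n J) (α β α' β' : BJ n J),
      (∀ i, ∑ k, ((η k).1 i : ℕ) = ∑ k, ((σ k).1 i : ℕ)) →
      (∀ i, (α.1 i : ℕ) + (β.1 i : ℕ) = (α'.1 i : ℕ) + (β'.1 i : ℕ)) →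
      ∏ k, (W (η k) α * W (η k) β) = ∏ k, (W (σ k) α' * W (σ k) β')) :
    ∀ ν : Fin L → BJ n J,
      ∑ η : Fin L → BJ n J,
        (∑ i : Fin (L - 1),
          (if ∀ j : Fin L, (j : ℕ) ≠ (i : ℕ) → (j : ℕ) ≠ (i : ℕ) + 1 → ν j = η j
            then (1 : ℂ) else 0) *
            H (ν ⟨i, by have := i.2; omega⟩, ν ⟨(i : ℕ) + 1, by have := i.2; omega⟩)
              (η ⟨i, by have := i.2; omega⟩, η ⟨(i : ℕ) + 1, by have := i.2; omega⟩)) *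
          (∏ k : Fin L, ∏ l : Fin L, if k < l then W (η k) (η l) else 1)
        = ((L : ℂ) - 1) * a *
          (∏ k : Fin L, ∏ l : Fin L, if k < l then W (ν k) (ν l) else 1) := by
  intro ν
  classical
  set P : (Fin L → BJ n J) → ℂ :=
    fun x => ∏ k : Fin L, ∏ l : Fin L, if k < l then W (x k) (x l) else 1 with hP
  have key : ∀ (i₀ i₁ : Fin L), (i₀ : ℕ) + 1 = (i₁ : ℕ) →
      ∑ η : Fin L → BJ n J,
        (if ∀ j : Fin L, (j : ℕ) ≠ (i₀ : ℕ) → (j : ℕ) ≠ (i₀ : ℕ) + 1 → ν j = η j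
          then (1 : ℂ) else 0) * H (ν i₀, ν i₁) (η i₀, η i₁) * P η = a * P ν := by
    intro i₀ i₁ hii
    have hne : i₀ ≠ i₁ := Fin.ne_of_val_ne (by omega)
    have hlt : i₀ < i₁ := by rw [Fin.lt_def]; omega
    have hi₁mem : i₁ ∈ univ.erase i₀ := mem_erase.mpr ⟨hne.symm, mem_univ _⟩
    set E : Finset (Fin L) := (univ.erase i₀).erase i₁ with hE
    have hmemE : ∀ k : Fin L, k ∈ E ↔ k ≠ i₁ ∧ k ≠ i₀ := by
      intro k; simp [hE, mem_erase]
    -- splitting lemma for the double product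
    have hsplit : ∀ x : Fin L → BJ n J, P x =
        W (x i₀) (x i₁) *
          ((∏ k ∈ univ.erase i₀,
              ((if k < i₀ then W (x k) (x i₀) else 1) * (if k < i₁ then W (x k) (x i₁) else 1))) *
           ((∏ l ∈ E, ((if i₀ < l then W (x i₀) (x l) else 1) * (if i₁ < l then W (x i₁) (x l) else 1))) *
            (∏ k ∈ E, ∏ l ∈ E, if k < l then W (x k) (x l) else 1))) := by
      intro x
      have h1 : ∀ k : Fin L,
          (∏ l : Fin L, if k < l then W (x k) (x l) else 1) =
            (if k < i₀ then W (x k) (x i₀) else 1) *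
              ((if k < i₁ then W (x k) (x i₁) else 1) *
                ∏ l ∈ E, if k < l then W (x k) (x l) else 1) := by
        intro k
        rw [← Finset.mul_prod_erase univ _ (mem_univ i₀),
          ← Finset.mul_prod_erase (univ.erase i₀) _ hi₁mem]
      have h2 : P x = (∏ k : Fin L, (if k < i₀ then W (x k) (x i₀) else 1)) *
          ((∏ k : Fin L, (if k < i₁ then W (x k) (x i₁) else 1)) *
            (∏ k : Fin L, ∏ l ∈ E, if k < l then W (x k) (x l) else 1)) := by
        rw [hP]
        simp only [h1]
        rw [Finset.prod_mul_distrib, Finset.prod_mul_distrib]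
      rw [h2]
      rw [← Finset.mul_prod_erase univ (fun k => if k < i₀ then W (x k) (x i₀) else 1) (mem_univ i₀),
        ← Finset.mul_prod_erase univ (fun k => if k < i₁ then W (x k) (x i₁) else 1) (mem_univ i₀),
        ← Finset.mul_prod_erase univ (fun k => ∏ l ∈ E, if k < l then W (x k) (x l) else 1) (mem_univ i₀),
        ← Finset.mul_prod_erase (univ.erase i₀) (fun k => ∏ l ∈ E, if k < l then W (x k) (x l) else 1) hi₁mem]
      rw [if_neg (lt_irrefl i₀), if_pos hlt]
      simp only [Finset.prod_mul_distrib]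
      ring
    -- the updated configuration
    set upd : BJ n J × BJ n J → (Fin L → BJ n J) :=
      fun p => Function.update (Function.update ν i₀ p.1) i₁ p.2 with hupd
    have hupd1 : ∀ p, upd p i₁ = p.2 := fun p => by simp [hupd]
    have hupd0 : ∀ p, upd p i₀ = p.1 := fun p => by
      simp [hupd, Function.update_apply, hne]
    have hupdo : ∀ p (j : Fin L), j ≠ i₀ → j ≠ i₁ → upd p j = ν j := by
      intro p j h0 h1
      simp [hupd, Function.update_apply, h0, h1]
    -- P of the updated configuration, when weights are preserved
    have hPupd : ∀ p : BJ n J × BJ n J,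
        (∀ c, ((ν i₀).1 c : ℕ) + ((ν i₁).1 c : ℕ) = (p.1.1 c : ℕ) + (p.2.1 c : ℕ)) →
        P (upd p) = W p.1 p.2 *
          ((∏ k ∈ univ.erase i₀,
              ((if k < i₀ then W (ν k) (ν i₀) else 1) * (if k < i₁ then W (ν k) (ν i₁) else 1))) *
           ((∏ l ∈ E, ((if i₀ < l then W (ν i₀) (ν l) else 1) * (if i₁ < l then W (ν i₁) (ν l) else 1))) *
            (∏ k ∈ E, ∏ l ∈ E, if k < l then W (ν k) (ν l) else 1))) := by
      intro p hwc
      rw [hsplit (upd p), hupd0, hupd1]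
      congr 1
      congr 1
      · -- chunk A
        refine Finset.prod_congr rfl ?_
        intro k hk
        have hk0 : k ≠ i₀ := (mem_erase.mp hk).1
        by_cases hki : k < i₀
        · have hki1 : k < i₁ := lt_trans hki hlt
          have hk1 : k ≠ i₁ := ne_of_lt hki1
          rw [hupdo p k hk0 hk1, if_pos hki, if_pos hki, if_pos hki1, if_pos hki1]
          have := hi2 1 ![ν k] ![ν k] p.1 p.2 (ν i₀) (ν i₁) (fun _ => rfl)
            (fun c => (hwc c).symm)
          simpa [Fin.prod_univ_one] using this
        · have hgt : i₀ < k := lt_of_le_of_ne (not_lt.mp hki) (Ne.symm hk0)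
          have hk1 : ¬ k < i₁ := by
            rw [Fin.lt_def] at hgt ⊢; omega
          rw [if_neg hki, if_neg hki, if_neg hk1, if_neg hk1]
      · congr 1
        · -- chunk B
          refine Finset.prod_congr rfl ?_
          intro l hl
          have hl1 : l ≠ i₁ := ((hmemE l).mp hl).1
          have hl0 : l ≠ i₀ := ((hmemE l).mp hl).2
          by_cases hli : i₁ < l
          · have hli0 : i₀ < l := lt_trans hlt hli
            rw [hupdo p l hl0 hl1, if_pos hli0, if_pos hli0, if_pos hli, if_pos hli]
            have := hi1 2 ![p.1, p.2] ![ν i₀, ν i₁] (ν l)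
              (fun c => by
                have := hwc c
                simp only [Fin.sum_univ_two, Matrix.cons_val_zero, Matrix.cons_val_one,
                  Matrix.head_cons]
                omega)
            simpa [Fin.prod_univ_two] using this
          · have hll : ¬ i₀ < l := by
              rw [Fin.lt_def] at hli ⊢
              have h0 : (l : ℕ) ≠ (i₀ : ℕ) := fun h => hl0 (Fin.ext h)
              have h1 : (l : ℕ) ≠ (i₁ : ℕ) := fun h => hl1 (Fin.ext h)
              omega
            rw [if_neg hll, if_neg hll, if_neg hli, if_neg hli]
        · -- chunk R
          refine Finset.prod_congr rfl ?_
          intro k hk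
          refine Finset.prod_congr rfl ?_
          intro l hl
          rw [hupdo p k ((hmemE k).mp hk).2 ((hmemE k).mp hk).1,
            hupdo p l ((hmemE l).mp hl).2 ((hmemE l).mp hl).1]
    -- rewrite the sum over configurations as a sum over pairs
    have hbij : ∑ η : Fin L → BJ n J,
        (if ∀ j : Fin L, (j : ℕ) ≠ (i₀ : ℕ) → (j : ℕ) ≠ (i₀ : ℕ) + 1 → ν j = η j
          then (1 : ℂ) else 0) * H (ν i₀, ν i₁) (η i₀, η i₁) * P η =
        ∑ p : BJ n J × BJ n J, H (ν i₀, ν i₁) p * P (upd p) := by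
      simp only [ite_mul, one_mul, zero_mul]
      rw [← Finset.sum_filter]
      refine Finset.sum_nbij' (fun η => (η i₀, η i₁)) upd ?_ ?_ ?_ ?_ ?_
      · intro η _; exact mem_univ _
      · intro p _
        simp only [mem_filter, mem_univ, true_and]
        intro j h0 h1
        have hj0 : j ≠ i₀ := fun h => h0 (by rw [h])
        have hj1 : j ≠ i₁ := fun h => h1 (by rw [h]; omega)
        exact (hupdo p j hj0 hj1).symm
      · intro η hη
        simp only [mem_filter, mem_univ, true_and] at hη
        funext j
        by_cases hj1 : j = i₁
        · subst hj1; exact hupd1 _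
        · by_cases hj0 : j = i₀
          · subst hj0; exact hupd0 _
          · rw [hupdo _ j hj0 hj1]
            exact hη j (fun h => hj0 (Fin.ext h)) (fun h => hj1 (Fin.ext (by omega)))
      · intro p _
        show (upd p i₀, upd p i₁) = p
        rw [hupd0, hupd1]
      · intro η hη
        simp only [mem_filter, mem_univ, true_and] at hη
        have : upd (η i₀, η i₁) = η := by
          funext j
          by_cases hj1 : j = i₁
          · subst hj1; exact hupd1 _
          · by_cases hj0 : j = i₀
            · subst hj0; exact hupd0 _
            · rw [hupdo _ j hj0 hj1]
              exact hη j (fun h => hj0 (Fin.ext h)) (fun h => hj1 (Fin.ext (by omega)))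
        rw [this]
    rw [hbij]
    have hterm : ∀ p : BJ n J × BJ n J,
        H (ν i₀, ν i₁) p * P (upd p) = H (ν i₀, ν i₁) p * W p.1 p.2 *
          ((∏ k ∈ univ.erase i₀,
              ((if k < i₀ then W (ν k) (ν i₀) else 1) * (if k < i₁ then W (ν k) (ν i₁) else 1))) *
           ((∏ l ∈ E, ((if i₀ < l then W (ν i₀) (ν l) else 1) * (if i₁ < l then W (ν i₁) (ν l) else 1))) *
            (∏ k ∈ E, ∏ l ∈ E, if k < l then W (ν k) (ν l) else 1))) := by
      intro p
      by_cases hz : H (ν i₀, ν i₁) p = 0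
      · rw [hz]; ring
      · rw [hPupd p (hwp _ _ hz)]; ring
    rw [Finset.sum_congr rfl (fun p _ => hterm p), ← Finset.sum_mul, heig (ν i₀, ν i₁)]
    rw [hsplit ν]
    ring
  -- now sum the key identity over the bonds
  simp only [Finset.sum_mul]
  rw [Finset.sum_comm]
  have : ∀ i : Fin (L - 1), i ∈ (univ : Finset (Fin (L - 1))) →
      (∑ η : Fin L → BJ n J,
        (if ∀ j : Fin L, (j : ℕ) ≠ (i : ℕ) → (j : ℕ) ≠ (i : ℕ) + 1 → ν j = η j
          then (1 : ℂ) else 0) *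
          H (ν ⟨i, by have := i.2; omega⟩, ν ⟨(i : ℕ) + 1, by have := i.2; omega⟩)
            (η ⟨i, by have := i.2; omega⟩, η ⟨(i : ℕ) + 1, by have := i.2; omega⟩) * P η)
        = a * P ν := by
    intro i _
    exact key ⟨i, by have := i.2; omega⟩ ⟨(i : ℕ) + 1, by have := i.2; omega⟩ rfl
  rw [Finset.sum_congr rfl this, Finset.sum_const, card_univ, Fintype.card_fin, nsmul_eq_mul]
  have hcast : ((L - 1 : ℕ) : ℂ) = (L : ℂ) - 1 := by
    have : 1 ≤ L := by omega
    push_cast [Nat.cast_sub this]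
    ring
  rw [hcast]
  ring
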